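/- Let Γ be a tree on the vertex set [m+1] such that {m, m+1} is a leaf of Γ with m+1 a free vertex (a vertex belonging to exactly one edge), and let Γ' be the tree on [m] obtained from Γ by removing the edge {m, m+1}. Order the edges so that {m, m+1} is last. If v_1,...,v_{m+1} are the maximal minors of A(Γ) and v_1',...,v_m' are the maximal minors of A(Γ'), then v_j = ± x_{m+1,m}·v_j' for j = 1,...,m, and v_{m+1} = ± x_{m,m+1}·v_m'. -/

import Mathlib

open MvPolynomial

namespace CMCodim2

noncomputable section

/-- The total degree of an exponent vector (of a monomial). -/
def mdeg {σ : Type*} (a : σ →₀ ℕ) : ℕ := a.sum fun _ e => e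

/-- The height (codimension) of an ideal: the infimum of the heights of the
prime ideals containing it. -/
def idealHeight {R : Type*} [CommRing R] (I : Ideal R) : ℕ∞ :=
  ⨅ (p : PrimeSpectrum R) (_ : I ≤ p.asIdeal), Order.height p

/-- An ideal `I` of a polynomial ring is a Cohen–Macaulay ideal of codimension `2`
iff it has height `2` and `R/I` has a free resolution
`0 → R^a → R^b → R → R/I → 0` of length `2` (Auslander–Buchsbaum). -/
def IsCMCodim2 {R : Type*} [CommRing R] (I : Ideal R) : Prop :=
  idealHeight I = 2 ∧
    ∃ (a b : ℕ) (f : (Fin a → R) →ₗ[R] (Fin b → R)) (g : (Fin b → R) →ₗ[R] R),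
      Function.Injective f ∧ LinearMap.range f = LinearMap.ker g ∧
        LinearMap.range g = I

/-- The map `φ₁ : S^{m+1} → S`, `e_i ↦ u_i`, where `u_i` is the (monic) monomial
with exponent vector `d i`. -/
def phi (K : Type*) [Field K] {σ : Type*} (m : ℕ) (d : Fin (m + 1) → (σ →₀ ℕ)) :
    (Fin (m + 1) → MvPolynomial σ K) →ₗ[MvPolynomial σ K] MvPolynomial σ K where
  toFun v := ∑ i, v i * monomial (d i) 1
  map_add' x y := by simp [add_mul, Finset.sum_add_distrib]
  map_smul' c x := by simp [Finset.mul_sum, mul_assoc]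

/-- The Taylor relation `r_{ij} = u_{ji} e_j - u_{ij} e_i ∈ S^{m+1}` of the monomials
`u_i, u_j` with exponent vectors `d i, d j`; here `u_{ji} = u_i / gcd(u_i,u_j)`
has exponent vector `d i - d j` (truncated subtraction). -/
def taylorRel (K : Type*) [Field K] {σ : Type*} (m : ℕ) (d : Fin (m + 1) → (σ →₀ ℕ))
    (i j : Fin (m + 1)) : Fin (m + 1) → MvPolynomial σ K := fun k =>
  if k = j then monomial (d i - d j) 1
  else if k = i then -(monomial (d j - d i) 1) else 0

/-- `t` lists the `m` (unordered) pairs of indices of Taylor relations forming the rows of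
a Hilbert–Burch matrix of the ideal generated by the `m+1` monomials with exponent
vectors `d i`: the corresponding Taylor relations generate (hence, being `m` elements
generating the free rank-`m` module, minimally generate) the first syzygy module
`U = ker φ₁`. -/
def IsHB (K : Type*) [Field K] {σ : Type*} (m : ℕ) (d : Fin (m + 1) → (σ →₀ ℕ))
    (t : Fin m → Fin (m + 1) × Fin (m + 1)) : Prop :=
  (∀ k, (t k).1 ≠ (t k).2) ∧
    Submodule.span (MvPolynomial σ K)
        (Set.range fun k => taylorRel K m d (t k).1 (t k).2) =
      LinearMap.ker (phi K m d)

/-- The graph on `[m+1]` whose edges `{i,j}` are the pairs of columns in which the rows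
of a Hilbert–Burch matrix (given by the list `t` of pairs) have their nonzero entries. -/
def relGraph {m : ℕ} (t : Fin m → Fin (m + 1) × Fin (m + 1)) :
    SimpleGraph (Fin (m + 1)) :=
  SimpleGraph.fromRel fun i j => ∃ k, t k = (i, j)

/-- `T(I)`: the set of relation trees (graphs of Hilbert–Burch matrices) of the ideal
generated by the `m+1` monomials with exponent vectors `d i`. -/
def relTrees (K : Type*) [Field K] {σ : Type*} (m : ℕ) (d : Fin (m + 1) → (σ →₀ ℕ)) :
    Set (SimpleGraph (Fin (m + 1))) :=
  {Γ | ∃ t, IsHB K m d t ∧ relGraph t = Γ}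

/-- The Taylor graph `G(I)`: the union of all relation trees of `I`. -/
def taylorGraph (K : Type*) [Field K] {σ : Type*} (m : ℕ)
    (d : Fin (m + 1) → (σ →₀ ℕ)) : SimpleGraph (Fin (m + 1)) :=
  sSup (relTrees K m d)

/-- `I` is (the monomial ideal) minimally generated by the `m+1` monic monomials with
exponent vectors `d i`. -/
def MinGens (K : Type*) [Field K] {σ : Type*} (m : ℕ) (d : Fin (m + 1) → (σ →₀ ℕ))
    (I : Ideal (MvPolynomial σ K)) : Prop :=
  I = Ideal.span (Set.range fun i => (monomial (d i) 1 : MvPolynomial σ K)) ∧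
    ∀ j : Fin (m + 1), (monomial (d j) 1 : MvPolynomial σ K) ∉
      Ideal.span ((fun i => (monomial (d i) 1 : MvPolynomial σ K)) '' {i | i ≠ j})

/-- The ideal generated by the `m+1` monomials with exponent vectors `d i` has a linear
resolution: all generators have the same degree and all the entries of every
Hilbert–Burch matrix of `I` are linear forms (i.e. every Taylor relation occurring as a
row of a Hilbert–Burch matrix is linear). -/
def HasLinearRes (K : Type*) [Field K] {σ : Type*} (m : ℕ)
    (d : Fin (m + 1) → (σ →₀ ℕ)) : Prop :=
  (∃ c, ∀ i, mdeg (d i) = c) ∧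
    ∀ t, IsHB K m d t →
      ∀ k, mdeg (d (t k).1 - d (t k).2) = 1 ∧ mdeg (d (t k).2 - d (t k).1) = 1

/-- A graph is chordal if every cycle of length at least `4` has a chord, i.e. an edge
of the graph joining two vertices of the cycle which is not an edge of the cycle. -/
def IsChordal {V : Type*} (G : SimpleGraph V) : Prop :=
  ∀ ⦃v : V⦄ (w : G.Walk v v), w.IsCycle → 4 ≤ w.length →
    ∃ a b, a ∈ w.support ∧ b ∈ w.support ∧ G.Adj a b ∧ s(a, b) ∉ w.edges

/-- A maximal clique of a graph. -/
def IsMaxClique {V : Type*} (G : SimpleGraph V) (s : Set V) : Prop :=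
  G.IsClique s ∧ ∀ t : Set V, G.IsClique t → s ⊆ t → t = s

/-- `b` is the "path-begin" function of the tree `G`: for `i ≠ j`, `b i j` is the
first vertex after `i` on the unique path in `G` from `i` to `j` (equivalently, the
neighbour of `i` which is one step closer to `j`). -/
def PathBegin {V : Type*} (G : SimpleGraph V) (b : V → V → V) : Prop :=
  ∀ i j : V, i ≠ j → G.Adj i (b i j) ∧ G.dist (b i j) j + 1 = G.dist i j

/-- The index set of the `2m` indeterminates `x_{ij}`: ordered pairs `(i,j)` such that
`{i,j}` is an edge of `G`. -/
abbrev EdgeVar {N : ℕ} (G : SimpleGraph (Fin N)) : Type :=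
  {p : Fin N × Fin N // G.Adj p.1 p.2}

/-- `ε` enumerates the edges of `G` (each unordered edge appearing exactly once). -/
def EdgeEnum {m : ℕ} (G : SimpleGraph (Fin (m + 1)))
    (ε : Fin m → Fin (m + 1) × Fin (m + 1)) : Prop :=
  ∀ i j : Fin (m + 1), G.Adj i j → ∃! k, ε k = (i, j) ∨ ε k = (j, i)

/-- The generic matrix `A(Γ)` attached to the tree `G` with edges enumerated by `ε`:
the `k`-th row, for the `k`-th edge `{i,j}`, has entry `-x_{ij}` in column `i`,
entry `x_{ji}` in column `j` and `0` elsewhere. -/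
def genMat (K : Type*) [Field K] {m : ℕ} (G : SimpleGraph (Fin (m + 1)))
    (ε : Fin m → Fin (m + 1) × Fin (m + 1)) (hε : ∀ k, G.Adj (ε k).1 (ε k).2) :
    Matrix (Fin m) (Fin (m + 1)) (MvPolynomial (EdgeVar G) K) := fun k l =>
  if l = (ε k).1 then -(X ⟨ε k, hε k⟩)
  else if l = (ε k).2 then X ⟨((ε k).2, (ε k).1), (hε k).symm⟩
  else 0

/-- `v_j`: the maximal minor of the generic matrix `A(Γ)` obtained by omitting the
`j`-th column. -/
def genMinor (K : Type*) [Field K] {m : ℕ} (G : SimpleGraph (Fin (m + 1)))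
    (ε : Fin m → Fin (m + 1) × Fin (m + 1)) (hε : ∀ k, G.Adj (ε k).1 (ε k).2)
    (j : Fin (m + 1)) : MvPolynomial (EdgeVar G) K :=
  ((genMat K G ε hε).submatrix id j.succAbove).det

/-- The monomial `∏_{i ≠ j} x_{i, b(i,j)}`. -/
def genV (K : Type*) [Field K] {m : ℕ} (G : SimpleGraph (Fin (m + 1)))
    (b : Fin (m + 1) → Fin (m + 1) → Fin (m + 1))
    (hb : ∀ i j : Fin (m + 1), i ≠ j → G.Adj i (b i j)) (j : Fin (m + 1)) :
    MvPolynomial (EdgeVar G) K :=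
  ∏ i, if h : i = j then 1 else X ⟨(i, b i j), hb i j h⟩

/-- The exponent vector of the monomial `∏_{i ≠ j} x_{i, b(i,j)}`. -/
def genD {m : ℕ} (G : SimpleGraph (Fin (m + 1)))
    (b : Fin (m + 1) → Fin (m + 1) → Fin (m + 1))
    (hb : ∀ i j : Fin (m + 1), i ≠ j → G.Adj i (b i j)) (j : Fin (m + 1)) :
    EdgeVar G →₀ ℕ :=
  ∑ i, if h : i = j then 0 else Finsupp.single ⟨(i, b i j), hb i j h⟩ 1

end

end CMCodim2

open CMCodim2 MvPolynomial
private lemma det_last_col {R : Type*} [CommRing R] {n : ℕ}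
    (M : Matrix (Fin (n + 1)) (Fin (n + 1)) R)
    (h : ∀ i : Fin n, M i.castSucc (Fin.last n) = 0) :
    M.det = M (Fin.last n) (Fin.last n) *
      (M.submatrix Fin.castSucc Fin.castSucc).det := by
  rw [Matrix.det_succ_column M (Fin.last n), Finset.sum_eq_single (Fin.last n)]
  · rw [Fin.succAbove_last, Fin.val_last,
      Even.neg_one_pow (⟨n, rfl⟩ : Even (n + n)), one_mul]
  · intro i _ hi
    obtain ⟨k, rfl⟩ := Fin.exists_castSucc_eq.mpr hi
    rw [h k, mul_zero, zero_mul]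
  · intro h'; exact absurd (Finset.mem_univ _) h'

private lemma det_last_row {R : Type*} [CommRing R] {n : ℕ}
    (M : Matrix (Fin (n + 1)) (Fin (n + 1)) R)
    (h : ∀ j : Fin n, M (Fin.last n) j.castSucc = 0) :
    M.det = M (Fin.last n) (Fin.last n) *
      (M.submatrix Fin.castSucc Fin.castSucc).det := by
  rw [← Matrix.det_transpose M, det_last_col M.transpose (fun i => h i),
    Matrix.transpose_apply, ← Matrix.transpose_submatrix, Matrix.det_transpose]

/-- Let `Γ` be a tree on the vertex set `[m+2]` (playing the role of
`[m+1]`, `m ≥ 1`, of the paper) such that the edge `{a, z}` joining its two last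
vertices `a` and `z` is a leaf with `z` a free vertex, and let `Γ'` be the tree on the
first `m+1` vertices obtained by removing this leaf. Order the edges so that the leaf
is last. If `v_1,...,v_{m+2}` are the maximal minors of `A(Γ)` and `v'_1,...,v'_{m+1}`
are those of `A(Γ')`, then `v_j = ± x_{z,a} · v'_j` for all `j ≤ m+1` and
`v_{m+2} = ± x_{a,z} · v'_{m+1}`. -/
theorem statement6 (K : Type*) [Field K] {m : ℕ}
    (G : SimpleGraph (Fin (m + 2))) (hG : G.IsTree)
    (ε : Fin (m + 1) → Fin (m + 2) × Fin (m + 2)) (hε : ∀ k, G.Adj (ε k).1 (ε k).2)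
    (henum : EdgeEnum G ε)
    (a : Fin (m + 2)) (ha : a = Fin.castSucc (Fin.last m))
    (hlast : ε (Fin.last m) = (a, Fin.last (m + 1)))
    (hfree : ∀ i, G.Adj i (Fin.last (m + 1)) → i = a)
    (haz : G.Adj a (Fin.last (m + 1)))
    (G' : SimpleGraph (Fin (m + 1)))
    (hG' : ∀ i j : Fin (m + 1), G'.Adj i j ↔ G.Adj i.castSucc j.castSucc)
    (hG'tree : G'.IsTree)
    (ε' : Fin m → Fin (m + 1) × Fin (m + 1)) (hε' : ∀ k, G'.Adj (ε' k).1 (ε' k).2)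
    (henum' : EdgeEnum G' ε')
    (hcomp : ∀ k : Fin m, ε k.castSucc = ((ε' k).1.castSucc, (ε' k).2.castSucc)) :
    (∀ j : Fin (m + 1),
      genMinor K G ε hε j.castSucc =
          X (⟨(Fin.last (m + 1), a), haz.symm⟩ : EdgeVar G) *
            MvPolynomial.rename (fun p : EdgeVar G' =>
              (⟨(p.1.1.castSucc, p.1.2.castSucc), (hG' p.1.1 p.1.2).mp p.2⟩ : EdgeVar G))
              (genMinor K G' ε' hε' j) ∨
      genMinor K G ε hε j.castSucc =
          -(X (⟨(Fin.last (m + 1), a), haz.symm⟩ : EdgeVar G) *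
            MvPolynomial.rename (fun p : EdgeVar G' =>
              (⟨(p.1.1.castSucc, p.1.2.castSucc), (hG' p.1.1 p.1.2).mp p.2⟩ : EdgeVar G))
              (genMinor K G' ε' hε' j))) ∧
    (genMinor K G ε hε (Fin.last (m + 1)) =
        X (⟨(a, Fin.last (m + 1)), haz⟩ : EdgeVar G) *
          MvPolynomial.rename (fun p : EdgeVar G' =>
            (⟨(p.1.1.castSucc, p.1.2.castSucc), (hG' p.1.1 p.1.2).mp p.2⟩ : EdgeVar G))
            (genMinor K G' ε' hε' (Fin.last m)) ∨
      genMinor K G ε hε (Fin.last (m + 1)) =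
        -(X (⟨(a, Fin.last (m + 1)), haz⟩ : EdgeVar G) *
          MvPolynomial.rename (fun p : EdgeVar G' =>
            (⟨(p.1.1.castSucc, p.1.2.castSucc), (hG' p.1.1 p.1.2).mp p.2⟩ : EdgeVar G))
            (genMinor K G' ε' hε' (Fin.last m)))) := by
  classical
  set emb : EdgeVar G' → EdgeVar G := fun p =>
    (⟨(p.1.1.castSucc, p.1.2.castSucc), (hG' p.1.1 p.1.2).mp p.2⟩ : EdgeVar G) with hemb
  have key : ∀ (k : Fin m) (l : Fin (m + 1)),
      genMat K G ε hε k.castSucc l.castSucc =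
        MvPolynomial.rename emb (genMat K G' ε' hε' k l) := by
    intro k l
    simp only [genMat, hcomp k, Fin.castSucc_inj]
    split_ifs with h1 h2
    · rw [map_neg, MvPolynomial.rename_X]
    · rw [MvPolynomial.rename_X]
    · rw [map_zero]
  have key0 : ∀ k : Fin m,
      genMat K G ε hε k.castSucc (Fin.last (m + 1)) = 0 := by
    intro k
    simp only [genMat, hcomp k]
    rw [if_neg (Fin.castSucc_lt_last _).ne', if_neg (Fin.castSucc_lt_last _).ne']
  constructor
  · intro j
    left
    have hne : j.castSucc ≠ Fin.last (m + 1) := (Fin.castSucc_lt_last j).ne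
    have hsA : (j.castSucc).succAbove (Fin.last m) = Fin.last (m + 1) :=
      Fin.succAbove_ne_last_last hne
    have h0 : ∀ i : Fin m,
        ((genMat K G ε hε).submatrix id (j.castSucc).succAbove) i.castSucc
          (Fin.last m) = 0 := by
      intro i
      simp only [Matrix.submatrix_apply, id, hsA]
      exact key0 i
    have hdet := det_last_col ((genMat K G ε hε).submatrix id (j.castSucc).succAbove) h0
    rw [genMinor, hdet]
    have hentry : ((genMat K G ε hε).submatrix id (j.castSucc).succAbove)
        (Fin.last m) (Fin.last m) =
        X (⟨(Fin.last (m + 1), a), haz.symm⟩ : EdgeVar G) := by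
      simp only [Matrix.submatrix_apply, id, hsA, genMat, hlast]
      rw [if_neg (by rw [ha]; exact (Fin.castSucc_lt_last _).ne')]
      simp
    rw [hentry]
    congr 1
    have hM : (((genMat K G ε hε).submatrix id (j.castSucc).succAbove).submatrix
        Fin.castSucc Fin.castSucc) =
        ((genMat K G' ε' hε').submatrix id j.succAbove).map
          (MvPolynomial.rename emb) := by
      refine Matrix.ext fun k c => ?_
      simp only [Matrix.submatrix_apply, Matrix.map_apply, id,
        Fin.castSucc_succAbove_castSucc]
      exact key k (j.succAbove c)
    rw [hM, genMinor]
    simp only [← AlgHom.mapMatrix_apply, ← AlgHom.map_det]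
  · right
    have hsA : (Fin.last (m + 1)).succAbove = Fin.castSucc := Fin.succAbove_last
    have h0 : ∀ c : Fin m,
        ((genMat K G ε hε).submatrix id (Fin.last (m + 1)).succAbove)
          (Fin.last m) c.castSucc = 0 := by
      intro c
      simp only [Matrix.submatrix_apply, id, hsA, genMat, hlast]
      have hc1 : c.castSucc.castSucc ≠ a := by
        rw [ha]
        exact fun h => (Fin.castSucc_lt_last c).ne (Fin.castSucc_injective _ h)
      rw [if_neg hc1, if_neg (Fin.castSucc_lt_last _).ne]
    have hdet := det_last_row ((genMat K G ε hε).submatrix id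
      (Fin.last (m + 1)).succAbove) h0
    rw [genMinor, hdet]
    have hentry : ((genMat K G ε hε).submatrix id (Fin.last (m + 1)).succAbove)
        (Fin.last m) (Fin.last m) =
        -X (⟨(a, Fin.last (m + 1)), haz⟩ : EdgeVar G) := by
      simp only [Matrix.submatrix_apply, id, hsA, genMat, hlast]
      rw [if_pos ha.symm]
    rw [hentry]
    have hM : (((genMat K G ε hε).submatrix id
        (Fin.last (m + 1)).succAbove).submatrix Fin.castSucc Fin.castSucc) =
        ((genMat K G' ε' hε').submatrix id (Fin.last m).succAbove).map
          (MvPolynomial.rename emb) := by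
      refine Matrix.ext fun k c => ?_
      simp only [Matrix.submatrix_apply, Matrix.map_apply, id, hsA, Fin.succAbove_last]
      exact key k c.castSucc
    rw [hM, genMinor]
    simp only [← AlgHom.mapMatrix_apply, ← AlgHom.map_det]
    ring
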